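/- Let Z ∈ ker(R_p) be nonzero (R_p(Z) = 0) and suppose there exist Y ∈ range(R_p) and W ∈ T⊥ with ‖W‖ ≤ 1, ⟨W, P_{T⊥}(Z)⟩ = ‖P_{T⊥}(Z)‖_*, such that ‖U_r V_r^T − λ P_T(Φ) − P_T(Y)‖_F ≤ a and ‖λ P_{T⊥}(Φ) + P_{T⊥}(Y)‖ ≤ b with b < 1. Then ⟨U_r V_r^T + W − λΦ − Y, Z⟩ ≥ −a‖P_T(Z)‖_F + (1 − b)‖P_{T⊥}(Z)‖_F. -/

import Mathlib

open Matrix BigOperators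

noncomputable def frob {m n : ℕ} (A : Matrix (Fin m) (Fin n) ℝ) : ℝ :=
  Real.sqrt (∑ i, ∑ j, (A i j)^2)

noncomputable def spec {m n : ℕ} (A : Matrix (Fin m) (Fin n) ℝ) : ℝ :=
  ‖LinearMap.toContinuousLinearMap (Matrix.toEuclideanLin A)‖

noncomputable def nuclear {n : ℕ} (A : Matrix (Fin n) (Fin n) ℝ) : ℝ :=
  ∑ i, Real.sqrt ((show (Aᵀ * A).IsHermitian from Matrix.isHermitian_conjTranspose_mul_self A).eigenvalues i)

noncomputable def ip {n : ℕ} (A B : Matrix (Fin n) (Fin n) ℝ) : ℝ := (Aᵀ * B).trace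

noncomputable def PT {n r : ℕ} (U V : Matrix (Fin n) (Fin r) ℝ)
    (Z : Matrix (Fin n) (Fin n) ℝ) : Matrix (Fin n) (Fin n) ℝ :=
  U * Uᵀ * Z + Z * (V * Vᵀ) - U * Uᵀ * Z * (V * Vᵀ)

noncomputable def PTperp {n r : ℕ} (U V : Matrix (Fin n) (Fin r) ℝ)
    (Z : Matrix (Fin n) (Fin n) ℝ) : Matrix (Fin n) (Fin n) ℝ := Z - PT U V Z

noncomputable def rowTwo {m n : ℕ} (A : Matrix (Fin m) (Fin n) ℝ) : ℝ :=
  ⨆ i, Real.sqrt (∑ j, (A i j)^2)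

noncomputable def maxAbs {m n : ℕ} (A : Matrix (Fin m) (Fin n) ℝ) : ℝ :=
  ⨆ i, ⨆ j, |A i j|

/-! ### Auxiliary lemmas -/

lemma dot_le' {ι : Type*} [Fintype ι] (x y : ι → ℝ) :
    |∑ i, x i * y i| ≤ Real.sqrt (∑ i, x i ^ 2) * Real.sqrt (∑ i, y i ^ 2) := by
  have h := abs_real_inner_le_norm ((WithLp.equiv 2 (ι → ℝ)).symm x)
      ((WithLp.equiv 2 (ι → ℝ)).symm y)
  simpa [PiLp.inner_apply, RCLike.inner_apply, EuclideanSpace.norm_eq,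
    Real.norm_eq_abs, sq_abs, mul_comm] using h

lemma dot_le {n : ℕ} (x y : Fin n → ℝ) :
    x ⬝ᵥ y ≤ Real.sqrt (∑ i, x i ^ 2) * Real.sqrt (∑ i, y i ^ 2) :=
  le_trans (le_abs_self _) (dot_le' x y)

lemma mulVec_norm_le {n : ℕ} (M : Matrix (Fin n) (Fin n) ℝ) (v : Fin n → ℝ) :
    Real.sqrt (∑ i, (M *ᵥ v) i ^ 2) ≤ spec M * Real.sqrt (∑ i, v i ^ 2) := by
  have h := (LinearMap.toContinuousLinearMap (Matrix.toEuclideanLin M)).le_opNorm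
      ((WithLp.equiv 2 (Fin n → ℝ)).symm v)
  rw [LinearMap.coe_toContinuousLinearMap'] at h
  simp only [Matrix.toEuclideanLin_apply_piLp_toLp, WithLp.equiv_symm_apply, EuclideanSpace.norm_eq,
    PiLp.toLp_apply, Real.norm_eq_abs, sq_abs] at h
  exact h

lemma trace_conj {n : ℕ} (Q B : Matrix (Fin n) (Fin n) ℝ) (hQ : Q * Qᵀ = 1) :
    B.trace = ∑ j, (fun k => Q k j) ⬝ᵥ (B *ᵥ (fun k => Q k j)) := by
  have h1 : B.trace = (Qᵀ * (B * Q)).trace := by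
    rw [Matrix.trace_mul_comm, Matrix.mul_assoc, hQ, Matrix.mul_one]
  rw [h1]
  simp [Matrix.trace, Matrix.diag, Matrix.mul_apply, dotProduct, Matrix.mulVec,
    Matrix.transpose_apply]

section dual
variable {n : ℕ} (N : Matrix (Fin n) (Fin n) ℝ)

noncomputable def eigv (j : Fin n) : Fin n → ℝ :=
  ⇑(((show (Nᵀ * N).IsHermitian from Matrix.isHermitian_conjTranspose_mul_self N)).eigenvectorBasis j)

lemma ip_eq_sum (M : Matrix (Fin n) (Fin n) ℝ) :
    ip M N = ∑ j, (M *ᵥ eigv N j) ⬝ᵥ (N *ᵥ eigv N j) := by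
  set hH := (show (Nᵀ * N).IsHermitian from Matrix.isHermitian_conjTranspose_mul_self N)
  set Q : Matrix (Fin n) (Fin n) ℝ := (hH.eigenvectorUnitary : Matrix (Fin n) (Fin n) ℝ)
  have hQT : Qᵀ = star Q := by
    ext i j; simp [Matrix.conjTranspose_apply, Matrix.star_apply]
  have hQ : Q * Qᵀ = 1 := by
    rw [hQT]; exact (Matrix.mem_unitaryGroup_iff.mp hH.eigenvectorUnitary.2)
  have hcol : ∀ j, (fun k => Q k j) = eigv N j := by
    intro j; funext k; simp [Q, eigv]
  have h := trace_conj Q (Mᵀ * N) hQ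
  rw [ip, h]
  refine Finset.sum_congr rfl fun j _ => ?_
  rw [hcol, ← Matrix.mulVec_mulVec, Matrix.dotProduct_mulVec, Matrix.vecMul_transpose]

lemma eigv_sq_sum (j : Fin n) : ∑ i, (eigv N j i) ^ 2 = 1 := by
  have h1 : ‖((show (Nᵀ * N).IsHermitian from Matrix.isHermitian_conjTranspose_mul_self N)).eigenvectorBasis j‖ = 1 :=
    (((show (Nᵀ * N).IsHermitian from Matrix.isHermitian_conjTranspose_mul_self N)).eigenvectorBasis.orthonormal).1 j
  rw [EuclideanSpace.norm_eq] at h1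
  have h2 : ∑ i, ‖((show (Nᵀ * N).IsHermitian from Matrix.isHermitian_conjTranspose_mul_self N)).eigenvectorBasis j i‖ ^ 2 = 1 := by
    have := congrArg (· ^ 2) h1
    simpa [Real.sq_sqrt (Finset.sum_nonneg fun i _ => sq_nonneg _)] using this
  simpa [Real.norm_eq_abs, sq_abs, eigv] using h2

lemma Nv_sq_sum (j : Fin n) :
    ∑ i, ((N *ᵥ eigv N j) i) ^ 2 =
      ((show (Nᵀ * N).IsHermitian from Matrix.isHermitian_conjTranspose_mul_self N)).eigenvalues j := by
  have hNc : Nᴴ = Nᵀ := by ext i j; simp [Matrix.conjTranspose_apply]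
  have key : (N *ᵥ eigv N j) ⬝ᵥ (N *ᵥ eigv N j)
      = ((show (Nᵀ * N).IsHermitian from Matrix.isHermitian_conjTranspose_mul_self N)).eigenvalues j := by
    have h0 : eigv N j ⬝ᵥ ((Nᴴ * N) *ᵥ eigv N j) = (N *ᵥ eigv N j) ⬝ᵥ (N *ᵥ eigv N j) := by
      rw [hNc, ← Matrix.mulVec_mulVec, Matrix.dotProduct_mulVec, Matrix.vecMul_transpose]
    rw [← h0]
    have h1 := ((show (Nᵀ * N).IsHermitian from Matrix.isHermitian_conjTranspose_mul_self N)).mulVec_eigenvectorBasis j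
    rw [show ⇑(((show (Nᵀ * N).IsHermitian from Matrix.isHermitian_conjTranspose_mul_self N)).eigenvectorBasis j) = eigv N j from rfl] at h1
    rw [hNc, h1, dotProduct_smul]
    have := eigv_sq_sum N j
    simp only [dotProduct, smul_eq_mul]
    rw [show ∑ i, eigv N j i * eigv N j i = 1 by simpa [pow_two] using this]
    simp
  rw [← key]; simp [dotProduct, pow_two]

lemma nuclear_nonneg : 0 ≤ nuclear N :=
  Finset.sum_nonneg fun _ _ => Real.sqrt_nonneg _

lemma ip_le_spec_mul_nuclear (M : Matrix (Fin n) (Fin n) ℝ) :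
    ip M N ≤ spec M * nuclear N := by
  rw [ip_eq_sum, nuclear, Finset.mul_sum]
  refine Finset.sum_le_sum fun j _ => ?_
  calc (M *ᵥ eigv N j) ⬝ᵥ (N *ᵥ eigv N j)
      ≤ Real.sqrt (∑ i, ((M *ᵥ eigv N j) i) ^ 2) *
        Real.sqrt (∑ i, ((N *ᵥ eigv N j) i) ^ 2) := dot_le _ _
    _ = Real.sqrt (∑ i, ((M *ᵥ eigv N j) i) ^ 2) *
        Real.sqrt (((show (Nᵀ * N).IsHermitian from Matrix.isHermitian_conjTranspose_mul_self N)).eigenvalues j) := by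
        rw [Nv_sq_sum]
    _ ≤ (spec M * Real.sqrt (∑ i, (eigv N j i) ^ 2)) *
        Real.sqrt (((show (Nᵀ * N).IsHermitian from Matrix.isHermitian_conjTranspose_mul_self N)).eigenvalues j) :=
        mul_le_mul_of_nonneg_right (mulVec_norm_le M _) (Real.sqrt_nonneg _)
    _ = spec M * Real.sqrt (((show (Nᵀ * N).IsHermitian from Matrix.isHermitian_conjTranspose_mul_self N)).eigenvalues j) := by
        rw [eigv_sq_sum]; simp

lemma ip_self_eq (A : Matrix (Fin n) (Fin n) ℝ) : ip A A = ∑ i, ∑ j, (A i j) ^ 2 := by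
  simp only [ip, Matrix.trace, Matrix.diag, Matrix.mul_apply, Matrix.transpose_apply, pow_two]
  rw [Finset.sum_comm]

lemma sqrt_sum_le {ι : Type*} [Fintype ι] (f : ι → ℝ) (hf : ∀ i, 0 ≤ f i) :
    Real.sqrt (∑ i, f i) ≤ ∑ i, Real.sqrt (f i) := by
  have hS : 0 ≤ ∑ i, Real.sqrt (f i) := Finset.sum_nonneg fun _ _ => Real.sqrt_nonneg _
  rw [show (∑ i, Real.sqrt (f i)) = Real.sqrt ((∑ i, Real.sqrt (f i)) ^ 2) from
    (Real.sqrt_sq hS).symm]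
  apply Real.sqrt_le_sqrt
  calc ∑ i, f i = ∑ i, Real.sqrt (f i) * Real.sqrt (f i) := by
        refine Finset.sum_congr rfl fun i _ => (Real.mul_self_sqrt (hf i)).symm
    _ ≤ ∑ i, Real.sqrt (f i) * (∑ k, Real.sqrt (f k)) := by
        refine Finset.sum_le_sum fun i _ => mul_le_mul_of_nonneg_left
          (Finset.single_le_sum (fun k _ => Real.sqrt_nonneg _) (Finset.mem_univ i))
          (Real.sqrt_nonneg _)
    _ = (∑ i, Real.sqrt (f i)) ^ 2 := by rw [← Finset.sum_mul]; ring

lemma frob_le_nuclear (A : Matrix (Fin n) (Fin n) ℝ) : frob A ≤ nuclear A := by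
  have h1 : frob A = Real.sqrt (∑ j,
      ((show (Aᵀ * A).IsHermitian from Matrix.isHermitian_conjTranspose_mul_self A)).eigenvalues j) := by
    rw [frob, ← ip_self_eq, ip_eq_sum]
    congr 1
    refine Finset.sum_congr rfl fun j _ => ?_
    rw [← Nv_sq_sum]
    simp [dotProduct, pow_two]
  rw [h1, nuclear]
  exact sqrt_sum_le _ fun j => by
    rw [← Nv_sq_sum]; exact Finset.sum_nonneg fun i _ => sq_nonneg _

end dual

lemma frob_nonneg {m n : ℕ} (A : Matrix (Fin m) (Fin n) ℝ) : 0 ≤ frob A :=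
  Real.sqrt_nonneg _

lemma abs_ip_le {n : ℕ} (A B : Matrix (Fin n) (Fin n) ℝ) : |ip A B| ≤ frob A * frob B := by
  have hA : ip A B = ∑ p : Fin n × Fin n, A p.1 p.2 * B p.1 p.2 := by
    rw [Fintype.sum_prod_type]
    simp only [ip, Matrix.trace, Matrix.diag, Matrix.mul_apply, Matrix.transpose_apply]
    rw [Finset.sum_comm]
  have hfa : frob A = Real.sqrt (∑ p : Fin n × Fin n, (A p.1 p.2) ^ 2) := by
    rw [frob, Fintype.sum_prod_type]
  have hfb : frob B = Real.sqrt (∑ p : Fin n × Fin n, (B p.1 p.2) ^ 2) := by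
    rw [frob, Fintype.sum_prod_type]
  rw [hA, hfa, hfb]
  exact dot_le' _ _

/-! ### ip linearity -/

lemma ip_add_left {n : ℕ} (A B C : Matrix (Fin n) (Fin n) ℝ) :
    ip (A + B) C = ip A C + ip B C := by
  simp [ip, Matrix.transpose_add, Matrix.add_mul]

lemma ip_sub_left {n : ℕ} (A B C : Matrix (Fin n) (Fin n) ℝ) :
    ip (A - B) C = ip A C - ip B C := by
  simp [ip, Matrix.transpose_sub, Matrix.sub_mul]

lemma ip_smul_left {n : ℕ} (c : ℝ) (A B : Matrix (Fin n) (Fin n) ℝ) :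
    ip (c • A) B = c * ip A B := by
  simp [ip, Matrix.transpose_smul, Matrix.smul_mul]

lemma ip_add_right {n : ℕ} (A B C : Matrix (Fin n) (Fin n) ℝ) :
    ip A (B + C) = ip A B + ip A C := by
  simp [ip, Matrix.mul_add]

lemma ip_sub_right {n : ℕ} (A B C : Matrix (Fin n) (Fin n) ℝ) :
    ip A (B - C) = ip A B - ip A C := by
  simp [ip, Matrix.mul_sub]

lemma ip_zero_left {n : ℕ} (B : Matrix (Fin n) (Fin n) ℝ) : ip 0 B = 0 := by
  simp [ip]

lemma ip_neg_left {n : ℕ} (A B : Matrix (Fin n) (Fin n) ℝ) : ip (-A) B = -ip A B := by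
  simp [ip, Matrix.transpose_neg, Matrix.neg_mul]

lemma spec_neg {m n : ℕ} (A : Matrix (Fin m) (Fin n) ℝ) : spec (-A) = spec A := by
  simp [spec, map_neg]

/-! ### PT lemmas -/

lemma ip_PT_adj {n r : ℕ} (U V : Matrix (Fin n) (Fin r) ℝ) (A B : Matrix (Fin n) (Fin n) ℝ) :
    ip (PT U V A) B = ip A (PT U V B) := by
  have hp : (U * Uᵀ)ᵀ = U * Uᵀ := by rw [Matrix.transpose_mul, Matrix.transpose_transpose]
  have hq : (V * Vᵀ)ᵀ = V * Vᵀ := by rw [Matrix.transpose_mul, Matrix.transpose_transpose]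
  have t1 : ((U * Uᵀ * A)ᵀ * B).trace = (Aᵀ * (U * Uᵀ * B)).trace := by
    rw [Matrix.transpose_mul, hp, Matrix.mul_assoc]
  have t2 : ((A * (V * Vᵀ))ᵀ * B).trace = (Aᵀ * (B * (V * Vᵀ))).trace := by
    rw [Matrix.transpose_mul, hq, Matrix.mul_assoc, Matrix.trace_mul_comm (V * Vᵀ) (Aᵀ * B),
      Matrix.mul_assoc]
  have t3 : ((U * Uᵀ * A * (V * Vᵀ))ᵀ * B).trace
      = (Aᵀ * (U * Uᵀ * B * (V * Vᵀ))).trace := by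
    rw [Matrix.transpose_mul, hq, Matrix.transpose_mul, hp]
    rw [Matrix.mul_assoc (V * Vᵀ) (Aᵀ * (U * Uᵀ)) B]
    rw [Matrix.trace_mul_comm (V * Vᵀ) (Aᵀ * (U * Uᵀ) * B)]
    simp only [Matrix.mul_assoc]
  simp only [ip, PT, Matrix.transpose_sub, Matrix.transpose_add, Matrix.sub_mul,
    Matrix.add_mul, Matrix.mul_add, Matrix.mul_sub, Matrix.trace_sub, Matrix.trace_add]
  rw [t1, t2, t3]

lemma PT_idem {n r : ℕ} (U V : Matrix (Fin n) (Fin r) ℝ)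
    (hU : Uᵀ * U = 1) (hV : Vᵀ * V = 1) (A : Matrix (Fin n) (Fin n) ℝ) :
    PT U V (PT U V A) = PT U V A := by
  have hU' : ∀ X : Matrix (Fin r) (Fin n) ℝ, Uᵀ * (U * X) = X := by
    intro X; rw [← Matrix.mul_assoc, hU, Matrix.one_mul]
  have hV' : ∀ X : Matrix (Fin r) (Fin n) ℝ, Vᵀ * (V * X) = X := by
    intro X; rw [← Matrix.mul_assoc, hV, Matrix.one_mul]
  simp only [PT, Matrix.mul_add, Matrix.add_mul, Matrix.mul_sub, Matrix.sub_mul,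
    Matrix.mul_assoc, hU', hV']
  abel

lemma PT_UV {n r : ℕ} (U V : Matrix (Fin n) (Fin r) ℝ)
    (hU : Uᵀ * U = 1) (hV : Vᵀ * V = 1) : PT U V (U * Vᵀ) = U * Vᵀ := by
  have h1 : U * Uᵀ * (U * Vᵀ) = U * Vᵀ := by
    rw [Matrix.mul_assoc U Uᵀ (U * Vᵀ), ← Matrix.mul_assoc Uᵀ U Vᵀ, hU, Matrix.one_mul]
  have h2 : U * Vᵀ * (V * Vᵀ) = U * Vᵀ := by
    rw [Matrix.mul_assoc U Vᵀ (V * Vᵀ), ← Matrix.mul_assoc Vᵀ V Vᵀ, hV, Matrix.one_mul]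
  rw [PT, h1, h2]
  abel

theorem stmt18 (n r : ℕ) (U V : Matrix (Fin n) (Fin r) ℝ)
    (hU : Uᵀ * U = 1) (hV : Vᵀ * V = 1)
    (lam a b : ℝ) (hb : b < 1)
    (Φ Y W Z : Matrix (Fin n) (Fin n) ℝ) (hZ : Z ≠ 0)
    (hYZ : ip Y Z = 0)
    (hWT : PT U V W = 0) (hWspec : spec W ≤ 1)
    (hWdual : ip W (PTperp U V Z) = nuclear (PTperp U V Z))
    (ha : frob (U * Vᵀ - lam • PT U V Φ - PT U V Y) ≤ a)
    (hbnd : spec (lam • PTperp U V Φ + PTperp U V Y) ≤ b) :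
    ip (U * Vᵀ + W - lam • Φ - Y) Z ≥
      -a * frob (PT U V Z) + (1 - b) * frob (PTperp U V Z) := by
  have hdecomp : ∀ A : Matrix (Fin n) (Fin n) ℝ,
      ip A Z = ip (PT U V A) (PT U V Z) + ip (PTperp U V A) (PTperp U V Z) := by
    intro A
    have h1 : ip (PT U V A) (PT U V Z) = ip A (PT U V Z) := by
      rw [ip_PT_adj, PT_idem U V hU hV]
    have h2 : ip (PT U V A) Z = ip A (PT U V Z) := ip_PT_adj U V A Z
    simp only [PTperp, ip_sub_left, ip_sub_right, h1, h2]
    ring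
  have hUV : ip (U * Vᵀ) Z = ip (U * Vᵀ) (PT U V Z) := by
    have h := hdecomp (U * Vᵀ)
    rw [show PTperp U V (U * Vᵀ) = 0 by rw [PTperp, PT_UV U V hU hV, sub_self]] at h
    rw [PT_UV U V hU hV] at h
    simpa [ip_zero_left] using h
  have hW : ip W Z = ip W (PTperp U V Z) := by
    have h := hdecomp W
    rw [show PTperp U V W = W by rw [PTperp, hWT, sub_zero], hWT] at h
    simpa [ip_zero_left] using h
  have hPhi := hdecomp Φ
  have hY : ip (PT U V Y) (PT U V Z) + ip (PTperp U V Y) (PTperp U V Z) = 0 := by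
    rw [← hdecomp Y]; exact hYZ
  have hexp : ip (U * Vᵀ + W - lam • Φ - Y) Z
      = ip (U * Vᵀ) Z + ip W Z - lam * ip Φ Z - ip Y Z := by
    rw [ip_sub_left, ip_sub_left, ip_add_left, ip_smul_left]
  have key : ip (U * Vᵀ + W - lam • Φ - Y) Z
      = ip (U * Vᵀ - lam • PT U V Φ - PT U V Y) (PT U V Z)
        + ip W (PTperp U V Z)
        - ip (lam • PTperp U V Φ + PTperp U V Y) (PTperp U V Z) := by
    rw [hexp, hUV, hW, hPhi, hYZ]
    rw [ip_sub_left, ip_sub_left, ip_smul_left, ip_add_left, ip_smul_left]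
    linarith [hY]
  have ha0 : 0 ≤ a := le_trans (frob_nonneg _) ha
  have hCS : ip (U * Vᵀ - lam • PT U V Φ - PT U V Y) (PT U V Z) ≥ -(a * frob (PT U V Z)) := by
    have h1 : frob (U * Vᵀ - lam • PT U V Φ - PT U V Y) * frob (PT U V Z)
        ≤ a * frob (PT U V Z) := mul_le_mul_of_nonneg_right ha (frob_nonneg _)
    have h2 := abs_ip_le (U * Vᵀ - lam • PT U V Φ - PT U V Y) (PT U V Z)
    have h3 := neg_abs_le (ip (U * Vᵀ - lam • PT U V Φ - PT U V Y) (PT U V Z))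
    linarith
  have hdual : ip (lam • PTperp U V Φ + PTperp U V Y) (PTperp U V Z)
      ≤ b * nuclear (PTperp U V Z) := by
    calc ip (lam • PTperp U V Φ + PTperp U V Y) (PTperp U V Z)
        ≤ spec (lam • PTperp U V Φ + PTperp U V Y) * nuclear (PTperp U V Z) :=
          ip_le_spec_mul_nuclear _ _
      _ ≤ b * nuclear (PTperp U V Z) :=
          mul_le_mul_of_nonneg_right hbnd (nuclear_nonneg _)
  have hnuc : frob (PTperp U V Z) ≤ nuclear (PTperp U V Z) := frob_le_nuclear _
  have hfin : (1 - b) * frob (PTperp U V Z) ≤ (1 - b) * nuclear (PTperp U V Z) :=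
    mul_le_mul_of_nonneg_left hnuc (by linarith)
  rw [key, hWdual]
  linarith
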